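/- Let a₁,a₂,a₃ be pairwise coprime positive integers with a₁ > a₂ > a₃ > 1, and suppose L₁ = 2. Then for every {j,k} = {2,3} (i.e. for (j,k) = (2,3) and (j,k) = (3,2)), one has [L_j·a_j·a₁⁻¹]_{a_k} = 1. -/

import Mathlib

/-- The numerical semigroup generated by `a` and `b`:
`⟨a,b⟩ = {λ₁a + λ₂b : λ₁, λ₂ ∈ ℕ}`. -/
def numSg (a b : ℕ) : Set ℕ := {x | ∃ p q : ℕ, x = p * a + q * b}

/-- `[m⁻¹]ₙ`: the representative in `[0,n)` of the inverse of `m` modulo `n`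
(meaningful when `gcd m n = 1` and `n > 0`).  The remainder operator `[m]ₙ`
is ordinary `m % n`. -/
noncomputable def modInv (m n : ℕ) : ℕ := ((m : ZMod n)⁻¹).val


/-- `Lval a b c` is the least positive integer `x` with `x*a ∈ ⟨b,c⟩`. -/
noncomputable def Lval (a b c : ℕ) : ℕ := sInf {x : ℕ | 0 < x ∧ x * a ∈ numSg b c}

lemma numSg_comm (a b : ℕ) : numSg a b = numSg b a := by
  ext x
  constructor <;> rintro ⟨p, q, rfl⟩ <;> exact ⟨q, p, by ring⟩

lemma core (a b c : ℕ) (hac : Nat.Coprime a c) (hbc : Nat.Coprime b c)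
    (hb : 0 < b) (hc : 1 < c)
    (hnot : a ∉ numSg b c)
    (p q : ℕ) (hp : 1 ≤ p) (hq : 1 ≤ q) (hpq : 2 * a = p * b + q * c) :
    (Lval b a c) * b % c = a % c := by
  haveI : NeZero c := ⟨by omega⟩
  set x₀ : ℕ := ((a : ZMod c) * (b : ZMod c)⁻¹).val with hx₀def
  have hx₀lt : x₀ < c := ZMod.val_lt _
  have hgbc : Nat.gcd b c = 1 := hbc
  have hgac : Nat.gcd a c = 1 := hac
  have hcast : ((x₀ * b : ℕ) : ZMod c) = (a : ZMod c) := by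
    push_cast
    rw [hx₀def, ZMod.natCast_val, ZMod.cast_id]
    calc (a : ZMod c) * (b : ZMod c)⁻¹ * (b : ZMod c)
        = (a : ZMod c) * ((b : ZMod c) * (b : ZMod c)⁻¹) := by ring
      _ = (a : ZMod c) := by
          have h5 : ((b : ZMod c)).val.gcd c = 1 := by
            rw [ZMod.val_natCast, ← Nat.gcd_rec]; exact hbc.symm
          rw [ZMod.mul_inv_eq_gcd, h5]; simp
  have hmod : x₀ * b ≡ a [MOD c] := (ZMod.natCast_eq_natCast_iff _ _ _).mp hcast
  have hx₀pos : 0 < x₀ := by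
    rcases Nat.eq_zero_or_pos x₀ with h0 | h
    · exfalso
      rw [h0] at hmod
      have hca : c ∣ a := by
        have : a % c = 0 := by simpa [Nat.ModEq] using hmod.symm
        exact Nat.dvd_of_mod_eq_zero this
      have := Nat.dvd_gcd hca dvd_rfl
      rw [hgac] at this
      have := Nat.le_of_dvd one_pos this
      omega
    · exact h
  have hax : a ≤ x₀ * b := by
    by_contra hlt
    push_neg at hlt
    obtain ⟨t, ht⟩ := (Nat.modEq_iff_dvd' hlt.le).mp hmod
    have h' : a = c * t + x₀ * b := (Nat.sub_eq_iff_eq_add hlt.le).mp ht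
    exact hnot ⟨x₀, t, by rw [h']; ring⟩
  obtain ⟨t, ht⟩ := (Nat.modEq_iff_dvd' hax).mp hmod.symm
  have h' : x₀ * b = c * t + a := (Nat.sub_eq_iff_eq_add hax).mp ht
  have hx₀S : x₀ * b ∈ numSg a c := ⟨1, t, by rw [h']; ring⟩
  have hLle : Lval b a c ≤ x₀ := Nat.sInf_le ⟨hx₀pos, hx₀S⟩
  have hLmem : Lval b a c ∈ {x : ℕ | 0 < x ∧ x * b ∈ numSg a c} :=
    Nat.sInf_mem ⟨x₀, hx₀pos, hx₀S⟩
  obtain ⟨hLpos, u, v, huv⟩ := hLmem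
  have hu1 : u ≤ 1 := by
    by_contra h
    push_neg at h
    have h2a : 2 * a ≤ u * a := Nat.mul_le_mul_right a h
    have hqc : 0 < q * c := Nat.mul_pos hq (by omega)
    have hpL : p < Lval b a c := by
      have hmul : p * b < Lval b a c * b := by
        have hv : 0 ≤ v * c := Nat.zero_le _
        linarith
      exact lt_of_mul_lt_mul_right hmul (Nat.zero_le b)
    have hrep : (Lval b a c - p) * b = (u - 2) * a + (v + q) * c := by
      zify [hpL.le, (by omega : 2 ≤ u)]
      have h1 : (Lval b a c * b : ℤ) = u * a + v * c := by exact_mod_cast huv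
      have h2 : ((2 : ℤ)) * a = p * b + q * c := by exact_mod_cast hpq
      linear_combination h1 + h2
    have hle : Lval b a c ≤ Lval b a c - p :=
      Nat.sInf_le ⟨by omega, ⟨u - 2, v + q, hrep⟩⟩
    omega
  have hu0 : u ≠ 0 := by
    rintro rfl
    have heq : Lval b a c * b = v * c := by simpa using huv
    have hcd : c ∣ Lval b a c * b := heq ▸ dvd_mul_left c v
    have : c ∣ Lval b a c := (Nat.Coprime.dvd_of_dvd_mul_right hbc.symm) hcd
    have := Nat.le_of_dvd hLpos this
    omega
  have hu : u = 1 := by omega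
  subst hu
  rw [huv, one_mul, Nat.add_mul_mod_self_right]

lemma final (a c n : ℕ) (hac : Nat.Coprime a c) (hc : 1 < c) (h : n % c = a % c) :
    (n * modInv a c) % c = 1 := by
  haveI : NeZero c := ⟨by omega⟩
  haveI : Fact (1 < c) := ⟨hc⟩
  have hg : Nat.gcd a c = 1 := hac
  have hn : (n : ZMod c) = (a : ZMod c) := (ZMod.natCast_eq_natCast_iff _ _ _).mpr h
  have hone : ((n * modInv a c : ℕ) : ZMod c) = 1 := by
    push_cast [modInv]
    have h5 : ((a : ZMod c)).val.gcd c = 1 := by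
      rw [ZMod.val_natCast, ← Nat.gcd_rec]; exact hac.symm
    rw [ZMod.natCast_val, ZMod.cast_id, hn, ZMod.mul_inv_eq_gcd, h5]
    norm_num
  calc (n * modInv a c) % c = ((n * modInv a c : ℕ) : ZMod c).val := (ZMod.val_natCast _ _).symm
    _ = (1 : ZMod c).val := by rw [hone]
    _ = 1 := ZMod.val_one c

/-- Lemma 8(1): for pairwise coprime `a₁ > a₂ > a₃ > 1` with `L₁ = 2`, for
each `{j,k} = {2,3}` one has `[L_j·a_j·a₁⁻¹]_{a_k} = 1`. -/
theorem stmt10 (a₁ a₂ a₃ : ℕ)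
    (h12 : Nat.Coprime a₁ a₂) (h13 : Nat.Coprime a₁ a₃) (h23 : Nat.Coprime a₂ a₃)
    (hgt : a₁ > a₂ ∧ a₂ > a₃ ∧ a₃ > 1)
    (hL₁ : Lval a₁ a₂ a₃ = 2) :
    (Lval a₂ a₁ a₃ * a₂ * modInv a₁ a₃) % a₃ = 1 ∧
    (Lval a₃ a₁ a₂ * a₃ * modInv a₁ a₂) % a₂ = 1 := by
  obtain ⟨hg1, hg2, hg3⟩ := hgt
  have hnot : a₁ ∉ numSg a₂ a₃ := by
    intro h
    have : Lval a₁ a₂ a₃ ≤ 1 := Nat.sInf_le ⟨one_pos, by simpa using h⟩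
    omega
  have hS : (2 : ℕ) ∈ {x : ℕ | 0 < x ∧ x * a₁ ∈ numSg a₂ a₃} := by
    rw [← hL₁]
    exact Nat.sInf_mem ⟨a₂, by omega, ⟨a₁, 0, by ring⟩⟩
  obtain ⟨-, p, q, hpq⟩ := hS
  have hp : 1 ≤ p := by
    by_contra hp0
    have hp0 : p = 0 := by omega
    subst hp0
    have hd : a₃ ∣ 2 * a₁ := by
      rw [hpq]; simp
    have hd2 : a₃ ∣ 2 := (Nat.Coprime.dvd_of_dvd_mul_right h13.symm) hd
    have h32 : a₃ = 2 := by
      have := Nat.le_of_dvd (by norm_num) hd2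
      omega
    subst h32
    have ho1 : Odd a₁ := Nat.coprime_two_right.mp h13
    have ho2 : Odd a₂ := Nat.coprime_two_right.mp h23
    obtain ⟨k, hk⟩ := ho1
    obtain ⟨l, hl⟩ := ho2
    exact hnot ⟨1, (a₁ - a₂) / 2, by omega⟩
  have hq : 1 ≤ q := by
    by_contra hq0
    have hq0 : q = 0 := by omega
    subst hq0
    have hd : a₂ ∣ 2 * a₁ := by
      rw [hpq]; simp
    have hd2 : a₂ ∣ 2 := (Nat.Coprime.dvd_of_dvd_mul_right h12.symm) hd
    have := Nat.le_of_dvd (by norm_num) hd2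
    omega
  constructor
  · exact final a₁ a₃ _ h13 hg3
      (core a₁ a₂ a₃ h13 h23 (by omega) hg3 hnot p q hp hq hpq)
  · exact final a₁ a₂ _ h12 (by omega)
      (core a₁ a₃ a₂ h12 h23.symm (by omega) (by omega)
        (by rw [numSg_comm]; exact hnot) q p hq hp (by rw [hpq, add_comm]))
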